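/- The least eigenvalue of the path P_n (n ≥ 2) is non-main if and only if n is even. -/

import Mathlib

open Matrix Finset Polynomial

variable {V : Type*} [Fintype V] [DecidableEq V]

/-- `μ` is an eigenvalue of the adjacency matrix of `G`. -/
def SimpleGraph.IsEigenvalue (G : SimpleGraph V) [DecidableRel G.Adj] (μ : ℝ) : Prop :=
  ∃ x : V → ℝ, x ≠ 0 ∧ (G.adjMatrix ℝ) *ᵥ x = μ • x

/-- `μ` is a main eigenvalue: some associated eigenvector is not orthogonal
to the all-ones vector. -/
def SimpleGraph.IsMainEigenvalue (G : SimpleGraph V) [DecidableRel G.Adj] (μ : ℝ) : Prop :=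
  ∃ x : V → ℝ, x ≠ 0 ∧ (G.adjMatrix ℝ) *ᵥ x = μ • x ∧ ∑ v, x v ≠ 0

/-- `μ` is a non-main eigenvalue: it is an eigenvalue whose eigenspace is
orthogonal to the all-ones vector. -/
def SimpleGraph.IsNonMainEigenvalue (G : SimpleGraph V) [DecidableRel G.Adj] (μ : ℝ) : Prop :=
  G.IsEigenvalue μ ∧ ¬ G.IsMainEigenvalue μ

/-- The multiplicity of `μ` as an eigenvalue of `G` (as a root of the
characteristic polynomial of the adjacency matrix). -/
noncomputable def SimpleGraph.eigMult (G : SimpleGraph V) [DecidableRel G.Adj] (μ : ℝ) : ℕ :=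
  ((G.adjMatrix ℝ).charpoly).rootMultiplicity μ

/-- `G` is harmonic: its degree vector is an eigenvector of the adjacency matrix
associated with a positive integer eigenvalue. -/
def SimpleGraph.IsHarmonic (G : SimpleGraph V) [DecidableRel G.Adj] : Prop :=
  ∃ ℓ : ℕ, 0 < ℓ ∧
    (G.adjMatrix ℝ) *ᵥ (fun v => (G.degree v : ℝ)) = (ℓ : ℝ) • (fun v => (G.degree v : ℝ))


namespace PathAux

def p (μ : ℝ) : ℕ → ℝ
  | 0 => 0
  | 1 => 1
  | (k+2) => μ * p μ (k+1) - p μ k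

@[simp] lemma p_zero (μ : ℝ) : p μ 0 = 0 := rfl
@[simp] lemma p_one (μ : ℝ) : p μ 1 = 1 := rfl
lemma p_rec (μ : ℝ) (k : ℕ) : p μ (k+2) = μ * p μ (k+1) - p μ k := rfl

lemma p_trig (t : ℝ) : ∀ k : ℕ, p (2 * Real.cos t) k * Real.sin t = Real.sin (k * t) := by
  have H : ∀ k : ℕ, p (2 * Real.cos t) k * Real.sin t = Real.sin (k * t) ∧
      p (2 * Real.cos t) (k+1) * Real.sin t = Real.sin ((k+1 : ℕ) * t) := by
    intro k
    induction k with
    | zero => constructor <;> simp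
    | succ m ih =>
      refine ⟨ih.2, ?_⟩
      have e2 := ih.2
      have e1 := ih.1
      have h1 : ((m+2 : ℕ) : ℝ) * t = ((m+1:ℕ):ℝ)*t + t := by push_cast; ring
      have h2 : ((m:ℕ):ℝ) * t = ((m+1:ℕ):ℝ)*t - t := by push_cast; ring
      rw [h2, Real.sin_sub] at e1
      rw [p_rec, h1, Real.sin_add]
      linear_combination (2*Real.cos t) * e2 - e1
  exact fun k => (H k).1

def ext (n : ℕ) (x : Fin n → ℝ) (k : ℕ) : ℝ :=
  if h : 1 ≤ k ∧ k ≤ n then x ⟨k-1, by omega⟩ else 0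

lemma ext_apply {n : ℕ} (x : Fin n → ℝ) (i : Fin n) : ext n x (i.1+1) = x i := by
  have h : 1 ≤ i.1+1 ∧ i.1+1 ≤ n := ⟨by omega, i.2⟩
  rw [ext, dif_pos h]
  congr 1

lemma ext_zero {n : ℕ} (x : Fin n → ℝ) : ext n x 0 = 0 := by
  rw [ext, dif_neg]; omega

lemma ext_gt {n : ℕ} (x : Fin n → ℝ) {k : ℕ} (h : n < k) : ext n x k = 0 := by
  rw [ext, dif_neg]; omega

lemma mulVec_path {n : ℕ} [DecidableRel (SimpleGraph.pathGraph n).Adj]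
    (x : Fin n → ℝ) (i : Fin n) :
    (((SimpleGraph.pathGraph n).adjMatrix ℝ) *ᵥ x) i = ext n x i.1 + ext n x (i.1+2) := by
  have hx : ∀ j : Fin n, x j = ext n x (j.1+1) := fun j => (ext_apply x j).symm
  have step1 : (((SimpleGraph.pathGraph n).adjMatrix ℝ) *ᵥ x) i
      = ∑ j : Fin n, (if (SimpleGraph.pathGraph n).Adj i j then x j else 0) := by
    simp [Matrix.mulVec, dotProduct, ite_mul]
  rw [step1]
  have step2 : ∀ j : Fin n, (if (SimpleGraph.pathGraph n).Adj i j then x j else 0)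
      = (fun k => (if i.1+1 = k then ext n x (i.1+2) else 0)
          + (if k+1 = i.1 then ext n x i.1 else 0)) j.1 := by
    intro j
    by_cases h1 : i.1+1 = j.1
    · have hadj : (SimpleGraph.pathGraph n).Adj i j := SimpleGraph.pathGraph_adj.2 (Or.inl h1)
      simp only [if_pos hadj, if_pos h1, if_neg (show ¬(j.1+1 = i.1) by omega), add_zero, hx j]
      congr 1 <;> omega
    · by_cases h2 : j.1+1 = i.1
      · have hadj : (SimpleGraph.pathGraph n).Adj i j := SimpleGraph.pathGraph_adj.2 (Or.inr h2)
        simp only [if_pos hadj, if_neg h1, if_pos h2, zero_add, hx j]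
        congr 1 <;> omega
      · have hadj : ¬ (SimpleGraph.pathGraph n).Adj i j := by
          rw [SimpleGraph.pathGraph_adj]; push_neg; exact ⟨h1, h2⟩
        simp [if_neg hadj, if_neg h1, if_neg h2]
  rw [Finset.sum_congr rfl (fun j _ => step2 j),
    Fin.sum_univ_eq_sum_range (fun k => (if i.1+1 = k then ext n x (i.1+2) else 0)
          + (if k+1 = i.1 then ext n x i.1 else 0)) n, Finset.sum_add_distrib,
    add_comm (ext n x i.1) (ext n x (i.1+2))]
  congr 1
  · rw [Finset.sum_ite_eq]
    simp only [Finset.mem_range]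
    split_ifs with h
    · rfl
    · rw [ext_gt x (by omega)]
  · rcases Nat.eq_zero_or_pos i.1 with h0 | h0
    · rw [h0, ext_zero]
      apply Finset.sum_eq_zero
      intro k _
      rw [if_neg (by omega)]
    · have hc : ∀ k ∈ Finset.range n, (if k+1 = i.1 then ext n x i.1 else 0)
          = (if i.1 - 1 = k then ext n x i.1 else 0) := by
        intro k _
        exact if_congr (by omega) rfl rfl
      rw [Finset.sum_congr rfl hc, Finset.sum_ite_eq, if_pos]
      have := i.2
      exact Finset.mem_range.2 (by omega)

end PathAux

open PathAux in
theorem path_min_nonmain_iff_even {n : ℕ} (hn : 2 ≤ n)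
    [DecidableRel (SimpleGraph.pathGraph n).Adj]
    (lamn : ℝ)
    (hmin : IsLeast {μ | (SimpleGraph.pathGraph n).IsEigenvalue μ} lamn) :
    (SimpleGraph.pathGraph n).IsNonMainEigenvalue lamn ↔ Even n := by
  have hπ := Real.pi_pos
  have hn1 : (1:ℝ) < (n:ℝ) + 1 := by
    have : (2:ℝ) ≤ (n:ℝ) := by exact_mod_cast hn
    linarith
  set t0 : ℝ := Real.pi - Real.pi/((n:ℝ)+1) with ht0def
  have hθpos : 0 < Real.pi/((n:ℝ)+1) := by positivity
  have hθlt : Real.pi/((n:ℝ)+1) < Real.pi := div_lt_self hπ hn1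
  have ht0pos : 0 < t0 := by simp only [ht0def]; linarith
  have ht0lt : t0 < Real.pi := by simp only [ht0def]; linarith
  have hkey : ((n:ℝ)+1) * t0 = (n:ℝ) * Real.pi := by
    rw [ht0def]
    field_simp
    ring
  have hsint0 : 0 < Real.sin t0 := Real.sin_pos_of_pos_of_lt_pi ht0pos ht0lt
  set μ0 : ℝ := 2 * Real.cos t0 with hμ0def
  have hp := p_trig t0
  have hpn1 : p μ0 (n+1) = 0 := by
    have h1 := hp (n+1)
    rw [show (((n+1:ℕ)):ℝ) * t0 = (n:ℝ) * Real.pi by push_cast; rw [← hkey],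
      Real.sin_nat_mul_pi] at h1
    exact (mul_eq_zero.1 h1).resolve_right (ne_of_gt hsint0)
  -- eigen-equation ⇒ recurrence
  have recur_of_eig : ∀ (x : Fin n → ℝ) (μ : ℝ),
      ((SimpleGraph.pathGraph n).adjMatrix ℝ) *ᵥ x = μ • x →
      ∀ k, k < n → ext n x k + ext n x (k+2) = μ * ext n x (k+1) := by
    intro x μ hx k hk
    have h1 := congrFun hx ⟨k, hk⟩
    rw [mulVec_path] at h1
    simpa [ext_apply x ⟨k, hk⟩] using h1
  have ext_eq_p : ∀ (x : Fin n → ℝ) (μ : ℝ),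
      ((SimpleGraph.pathGraph n).adjMatrix ℝ) *ᵥ x = μ • x →
      ∀ k, k ≤ n → (ext n x k = ext n x 1 * p μ k ∧
        ext n x (k+1) = ext n x 1 * p μ (k+1)) := by
    intro x μ hx k
    induction k with
    | zero => intro _; simp [ext_zero]
    | succ m ih =>
      intro hm
      obtain ⟨e1, e2⟩ := ih (by omega)
      refine ⟨e2, ?_⟩
      have hr := recur_of_eig x μ hx m (by omega)
      rw [p_rec]
      have : ext n x (m+2) = μ * ext n x (m+1) - ext n x m := by linarith
      rw [this, e1, e2]
      ring
  have eig_root : ∀ μ : ℝ, (∃ x : Fin n → ℝ, x ≠ 0 ∧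
      ((SimpleGraph.pathGraph n).adjMatrix ℝ) *ᵥ x = μ • x) → p μ (n+1) = 0 := by
    intro μ ⟨x, hxne, hx⟩
    rcases eq_or_ne (ext n x 1) 0 with hc | hc
    · exfalso
      apply hxne
      funext i
      have := (ext_eq_p x μ hx i.1 (by omega)).2
      rw [ext_apply x i, hc, zero_mul] at this
      simpa using this
    · have h1 := (ext_eq_p x μ hx n le_rfl).2
      rw [ext_gt x (by omega)] at h1
      exact (mul_eq_zero.1 h1.symm).resolve_left hc
  -- the explicit eigenvector for μ0
  set x0 : Fin n → ℝ := fun j => p μ0 (j.1+1) with hx0def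
  have hextx0 : ∀ k, k ≤ n+1 → ext n x0 k = p μ0 k := by
    intro k hk
    by_cases h : 1 ≤ k ∧ k ≤ n
    · rw [PathAux.ext, dif_pos h]
      show p μ0 (k-1+1) = p μ0 k
      congr 1
      omega
    · have : k = 0 ∨ k = n+1 := by omega
      rcases this with h0 | h0
      · rw [h0, ext_zero]; simp
      · rw [h0, ext_gt x0 (by omega), hpn1]
  have heig0 : ((SimpleGraph.pathGraph n).adjMatrix ℝ) *ᵥ x0 = μ0 • x0 := by
    funext i
    have hi := i.2
    rw [mulVec_path, hextx0 i.1 (by omega), hextx0 (i.1+2) (by omega)]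
    have : (μ0 • x0) i = μ0 * p μ0 (i.1+1) := by simp [hx0def]
    rw [this, p_rec]
    ring
  have hx0ne : x0 ≠ 0 := by
    intro h
    have := congrFun h ⟨0, by omega⟩
    simp [hx0def] at this
  -- minimality: every eigenvalue is ≥ μ0
  have hlow : ∀ μ : ℝ, (∃ x : Fin n → ℝ, x ≠ 0 ∧
      ((SimpleGraph.pathGraph n).adjMatrix ℝ) *ᵥ x = μ • x) → μ0 ≤ μ := by
    intro μ hμ
    by_contra hlt
    push_neg at hlt
    have hroot := eig_root μ hμ
    rcases le_or_gt μ (-2) with hc | hc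
    · -- μ ≤ -2 : the signed solution is increasing and ≥ 1, so never zero
      have key2 : ∀ k : ℕ, 1 ≤ (-1:ℝ)^k * p μ (k+1) ∧
          (-1:ℝ)^k * p μ (k+1) ≤ (-1:ℝ)^(k+1) * p μ (k+2) := by
        intro k
        induction k with
        | zero =>
          constructor
          · simp
          · have h2 : p μ 2 = μ := by rw [p_rec]; simp
            simp only [zero_add, pow_zero, pow_one, p_one, h2, one_mul]
            linarith
        | succ m ih =>
          refine ⟨le_trans ih.1 ih.2, ?_⟩
          have e : (-1:ℝ)^(m+2) * p μ (m+3)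
              = (-μ) * ((-1:ℝ)^(m+1) * p μ (m+2)) - (-1:ℝ)^m * p μ (m+1) := by
            rw [show m+3 = (m+1)+2 from rfl, p_rec]
            simp only [pow_succ]
            ring
          have h1 := ih.1
          have h2 := ih.2
          rw [e]
          nlinarith
      have hcontra := (key2 n).1
      rw [hroot, mul_zero] at hcontra
      linarith
    · -- -2 < μ < μ0
      have hμ0le : μ0 ≤ 2 := by
        have := Real.cos_le_one t0
        rw [hμ0def]; linarith
      have hm1 : -1 ≤ μ/2 := by linarith
      have hm2 : μ/2 ≤ 1 := by linarith
      set t : ℝ := Real.arccos (μ/2) with htdef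
      have hcost : Real.cos t = μ/2 := Real.cos_arccos hm1 hm2
      have ht_le : t ≤ Real.pi := Real.arccos_le_pi _
      have ht_lt : t < Real.pi := by
        rcases lt_or_eq_of_le ht_le with h | h
        · exact h
        · exfalso
          rw [h, Real.cos_pi] at hcost
          linarith
      have ht0t : t0 < t := by
        by_contra hle
        push_neg at hle
        have := Real.cos_le_cos_of_nonneg_of_le_pi (Real.arccos_nonneg _)
          (le_of_lt ht0lt) hle
        rw [hcost] at this
        rw [hμ0def] at hlt
        linarith
      have hsint : 0 < Real.sin t := Real.sin_pos_of_pos_of_lt_pi (lt_trans ht0pos ht0t) ht_lt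
      have hμeq : μ = 2 * Real.cos t := by rw [hcost]; ring
      have h1 := p_trig t (n+1)
      rw [← hμeq, hroot, zero_mul] at h1
      obtain ⟨m, hm⟩ := Real.sin_eq_zero_iff.1 h1.symm
      have hb1 : (n:ℝ) * Real.pi < (m:ℝ) * Real.pi := by
        rw [hm, ← hkey]
        push_cast
        have : (0:ℝ) < (n:ℝ)+1 := by linarith
        nlinarith
      have hb2 : (m:ℝ) * Real.pi < ((n:ℝ)+1) * Real.pi := by
        rw [hm]
        push_cast
        have : (0:ℝ) < (n:ℝ)+1 := by linarith
        nlinarith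
      have hi1 : (n:ℤ) < m := by
        have := (mul_lt_mul_iff_left₀ hπ).1 hb1
        exact_mod_cast this
      have hi2 : m < (n:ℤ) + 1 := by
        have := (mul_lt_mul_iff_left₀ hπ).1 hb2
        exact_mod_cast this
      omega
  have hlam : lamn = μ0 := le_antisymm (hmin.2 ⟨x0, hx0ne, heig0⟩) (hlow lamn hmin.1)
  set S : ℝ := ∑ k ∈ Finset.range n, p μ0 (k+1) with hSdef
  have hsum_eig : ∀ x : Fin n → ℝ,
      ((SimpleGraph.pathGraph n).adjMatrix ℝ) *ᵥ x = μ0 • x →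
      ∑ v, x v = ext n x 1 * S := by
    intro x hx
    have h1 : ∑ v, x v = ∑ k ∈ Finset.range n, ext n x (k+1) := by
      rw [← Fin.sum_univ_eq_sum_range (fun k => ext n x (k+1)) n]
      exact Finset.sum_congr rfl fun i _ => (ext_apply x i).symm
    rw [h1, hSdef, Finset.mul_sum]
    apply Finset.sum_congr rfl
    intro k hk
    have hkn : k ≤ n := by
      have := Finset.mem_range.1 hk
      omega
    exact (ext_eq_p x μ0 hx k hkn).2
  -- telescoping evaluation of S
  have hS : S * Real.sin t0 * (2 * Real.sin (t0/2))
      = Real.cos (t0/2) - Real.cos ((n:ℝ)*Real.pi - t0/2) := by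
    have e1 : S * Real.sin t0 = ∑ k ∈ Finset.range n, Real.sin (((k+1:ℕ):ℝ) * t0) := by
      rw [hSdef, Finset.sum_mul]
      exact Finset.sum_congr rfl fun k _ => hp (k+1)
    have e2 : (∑ k ∈ Finset.range n, Real.sin (((k+1:ℕ):ℝ)*t0)) * (2*Real.sin (t0/2))
        = ∑ k ∈ Finset.range n,
          ((fun j : ℕ => Real.cos ((j:ℝ)*t0 + t0/2)) k
            - (fun j : ℕ => Real.cos ((j:ℝ)*t0 + t0/2)) (k+1)) := by
      rw [Finset.sum_mul]
      apply Finset.sum_congr rfl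
      intro k _
      simp only
      push_cast
      have h3 : (k:ℝ)*t0 + t0/2 = ((k:ℝ)+1)*t0 - t0/2 := by ring
      rw [h3, Real.cos_sub, Real.cos_add]
      ring
    rw [e1, e2, Finset.sum_range_sub' (fun j : ℕ => Real.cos ((j:ℝ)*t0 + t0/2)) n]
    have h4 : ((0:ℕ):ℝ)*t0 + t0/2 = t0/2 := by norm_num
    have h5 : ((n:ℕ):ℝ)*t0 + t0/2 = (n:ℝ)*Real.pi - t0/2 := by linear_combination hkey
    rw [h4, h5]
  have hsin2 : 0 < Real.sin (t0/2) :=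
    Real.sin_pos_of_pos_of_lt_pi (by linarith) (by linarith)
  have hcos2 : 0 < Real.cos (t0/2) :=
    Real.cos_pos_of_mem_Ioo ⟨by linarith, by linarith⟩
  have hx0sum : ∑ v, x0 v = S := by
    have h := hsum_eig x0 heig0
    rw [hextx0 1 (by omega)] at h
    simpa using h
  constructor
  · intro hnm
    by_contra hodd
    rw [Nat.not_even_iff_odd] at hodd
    obtain ⟨m, hm2⟩ := hodd
    have hgn : Real.cos ((n:ℝ)*Real.pi - t0/2) = -Real.cos (t0/2) := by
      have : (n:ℝ)*Real.pi - t0/2 = (Real.pi - t0/2) + (m:ℕ)*(2*Real.pi) := by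
        rw [hm2]; push_cast; ring
      rw [this, Real.cos_add_nat_mul_two_pi, Real.cos_pi_sub]
    have hSne : S ≠ 0 := by
      intro hS0
      rw [hS0, zero_mul, zero_mul, hgn] at hS
      linarith
    exact hnm.2 ⟨x0, hx0ne, by rw [hlam]; exact heig0, by rw [hx0sum]; exact hSne⟩
  · intro heven
    obtain ⟨m, hm2⟩ := heven
    have hgn : Real.cos ((n:ℝ)*Real.pi - t0/2) = Real.cos (t0/2) := by
      have : (n:ℝ)*Real.pi - t0/2 = (m:ℕ)*(2*Real.pi) - t0/2 := by
        rw [hm2]; push_cast; ring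
      rw [this, Real.cos_nat_mul_two_pi_sub]
    have hS0 : S = 0 := by
      rw [hgn, sub_self] at hS
      rcases mul_eq_zero.1 hS with h | h
      · rcases mul_eq_zero.1 h with h' | h'
        · exact h'
        · exact absurd h' (ne_of_gt hsint0)
      · exfalso; nlinarith
    refine ⟨⟨x0, hx0ne, by rw [hlam]; exact heig0⟩, ?_⟩
    rintro ⟨x, hxne, hxeig, hxsum⟩
    apply hxsum
    rw [hlam] at hxeig
    rw [hsum_eig x hxeig, hS0, mul_zero]
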